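/- There exists an instance with 2 agents and 6 indivisible goods, with additive subjective utilities u_1 = (19,7,4,3,2,1) and u_2 = (8,7,6,5,4,3) for goods g_1,…,g_6 and additive market valuation v = u_1, in which no allocation is simultaneously Pareto optimal with respect to the subjective utilities and SD-EF1 with respect to the market valuation. -/
import Mathlib

open Finset

/-- `sdPair w X Y` : bundle `X` stochastically dominates `Y` minus some good,
under valuation `w` (the SD-EF1 condition for one ordered pair of agents). -/
def sdPair {M : Type*} [Fintype M] [DecidableEq M] (w : M → ℝ) (X Y : Finset M) : Prop :=
  Y = ∅ ∨ ∃ g ∈ Y, ∀ h : M,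
    ((Y.erase g).filter (fun x => w h ≤ w x)).card ≤ (X.filter (fun x => w h ≤ w x)).card

def util₁ : Fin 6 → ℝ := ![19, 7, 4, 3, 2, 1]
def util₂ : Fin 6 → ℝ := ![8, 7, 6, 5, 4, 3]

def iu₁ : Fin 6 → ℤ := fun g => match g with
  | 0 => 19 | 1 => 7 | 2 => 4 | 3 => 3 | 4 => 2 | 5 => 1
def iu₂ : Fin 6 → ℤ := fun g => match g with
  | 0 => 8 | 1 => 7 | 2 => 6 | 3 => 5 | 4 => 4 | 5 => 3

lemma cast₁ (g : Fin 6) : util₁ g = (iu₁ g : ℝ) := by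
  fin_cases g <;> norm_num [util₁, iu₁]

lemma cast₂ (g : Fin 6) : util₂ g = (iu₂ g : ℝ) := by
  fin_cases g <;> norm_num [util₂, iu₂]

lemma sum₁ (A : Finset (Fin 6)) : ∑ g ∈ A, util₁ g = ((∑ g ∈ A, iu₁ g : ℤ) : ℝ) := by
  push_cast
  exact Finset.sum_congr rfl fun g _ => cast₁ g

lemma sum₂ (A : Finset (Fin 6)) : ∑ g ∈ A, util₂ g = ((∑ g ∈ A, iu₂ g : ℤ) : ℝ) := by
  push_cast
  exact Finset.sum_congr rfl fun g _ => cast₂ g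

def sdZ (X Y : Finset (Fin 6)) : Prop :=
  Y = ∅ ∨ ∃ g ∈ Y, ∀ h : Fin 6,
    ((Y.erase g).filter (fun x => iu₁ h ≤ iu₁ x)).card ≤ (X.filter (fun x => iu₁ h ≤ iu₁ x)).card

instance (X Y : Finset (Fin 6)) : Decidable (sdZ X Y) := by
  unfold sdZ; infer_instance

lemma filt (h : Fin 6) (Z : Finset (Fin 6)) :
    Z.filter (fun x => util₁ h ≤ util₁ x) = Z.filter (fun x => iu₁ h ≤ iu₁ x) := by
  apply Finset.filter_congr
  intro x _
  simp only [cast₁, Int.cast_le]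

lemma sd_iff (X Y : Finset (Fin 6)) : sdPair util₁ X Y ↔ sdZ X Y := by
  unfold sdPair sdZ
  simp only [filt]

lemma mainZ : ¬ ∃ A₁ : Finset (Fin 6),
    (¬ ∃ B₁ : Finset (Fin 6),
      (∑ g ∈ A₁, iu₁ g) ≤ (∑ g ∈ B₁, iu₁ g) ∧
      (∑ g ∈ A₁ᶜ, iu₂ g) ≤ (∑ g ∈ B₁ᶜ, iu₂ g) ∧
      ((∑ g ∈ A₁, iu₁ g) < (∑ g ∈ B₁, iu₁ g) ∨
        (∑ g ∈ A₁ᶜ, iu₂ g) < (∑ g ∈ B₁ᶜ, iu₂ g))) ∧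
    sdZ A₁ A₁ᶜ ∧ sdZ A₁ᶜ A₁ := by
  set_option maxRecDepth 10000 in decide

/-- In the instance with 2 agents, 6 goods, utilities `util₁`, `util₂` and
market valuation `v = util₁`, no allocation is Pareto optimal w.r.t. the
subjective utilities and SD-EF1 w.r.t. the market valuation. -/
theorem stmt_6 :
    ¬ ∃ A₁ A₂ : Finset (Fin 6), Disjoint A₁ A₂ ∧ A₁ ∪ A₂ = Finset.univ ∧
      -- Pareto optimality w.r.t. (util₁, util₂)
      (¬ ∃ B₁ B₂ : Finset (Fin 6), Disjoint B₁ B₂ ∧ B₁ ∪ B₂ = Finset.univ ∧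
        (∑ g ∈ A₁, util₁ g) ≤ (∑ g ∈ B₁, util₁ g) ∧
        (∑ g ∈ A₂, util₂ g) ≤ (∑ g ∈ B₂, util₂ g) ∧
        ((∑ g ∈ A₁, util₁ g) < (∑ g ∈ B₁, util₁ g) ∨
          (∑ g ∈ A₂, util₂ g) < (∑ g ∈ B₂, util₂ g))) ∧
      -- SD-EF1 w.r.t. the market valuation v = util₁
      sdPair util₁ A₁ A₂ ∧ sdPair util₁ A₂ A₁ := by
  rintro ⟨A₁, A₂, hd, hu, hPO, hs1, hs2⟩
  have hA₂ : A₂ = A₁ᶜ := by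
    rw [Finset.compl_eq_univ_sdiff, ← hu, Finset.union_sdiff_cancel_left hd]
  subst hA₂
  apply mainZ
  refine ⟨A₁, ?_, (sd_iff _ _).mp hs1, (sd_iff _ _).mp hs2⟩
  rintro ⟨B₁, h1, h2, h3⟩
  apply hPO
  refine ⟨B₁, B₁ᶜ, disjoint_compl_right, Finset.union_compl _, ?_, ?_, ?_⟩
  · rw [sum₁, sum₁]; exact_mod_cast h1
  · rw [sum₂, sum₂]; exact_mod_cast h2
  · rcases h3 with h | h
    · left; rw [sum₁, sum₁]; exact_mod_cast h
    · right; rw [sum₂, sum₂]; exact_mod_cast h
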